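/- Let V be a real Hilbert space, a a continuous coercive bilinear form, u ∈ V the solution of a(u, v) = F(v) for all v ∈ V with F ∈ V*. Let W ⊆ V be closed, C* the corrector onto W, Ṽ := (1 − C*)V, and suppose u_H ∈ V satisfies the Galerkin conditions a(u_H, ṽ) = F(ṽ) for all ṽ ∈ Ṽ and u − u_H ∈ W + Ṽ (trivially true since V = Ṽ ⊕ W). If additionally u_H ∈ span of the φⱼ and the discrete problem a(u_H, (1 − C*)v_H) = F((1 − C*)v_H) holds for all v_H in the coarse space, then u − u_H ∈ W, and consequently qⱼ(u) = qⱼ(u_H) for every quantity of interest qⱼ. -/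
import Mathlib


/-- Preservation of quantities of interest by the ideal numerical
homogenization. If `u` solves `a(u, v) = F(v)` for all `v`, `W = ⋂ ker qⱼ`, `C` is
the corrector onto `W`, and `u_H` satisfies the ideal discrete (Galerkin) problem
`a(u_H, (1 - C) v) = F((1 - C) v)` for all `v`, then `u - u_H ∈ W` and hence
`qⱼ(u) = qⱼ(u_H)` for every quantity of interest. -/
theorem stmt_8 {V : Type*} [NormedAddCommGroup V] [InnerProductSpace ℝ V]
    [CompleteSpace V] (N : ℕ)
    (a : V →ₗ[ℝ] V →ₗ[ℝ] ℝ) (α β : ℝ) (hα : 0 < α) (hαβ : α ≤ β)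
    (hcoer : ∀ v : V, α * ‖v‖ ^ 2 ≤ a v v)
    (hbdd : ∀ v w : V, |a v w| ≤ β * ‖v‖ * ‖w‖)
    (q : Fin N → (V →L[ℝ] ℝ)) (φ : Fin N → V)
    (hbi : ∀ k j : Fin N, q k (φ j) = if k = j then 1 else 0)
    (C : V →L[ℝ] V)
    (hCW : ∀ (v : V) (k : Fin N), q k (C v) = 0)
    (hC : ∀ v w : V, (∀ k : Fin N, q k w = 0) → a w (C v) = a w v)
    (F : V →L[ℝ] ℝ) (u u_H : V)
    (hu : ∀ v : V, a u v = F v)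
    (hu_H : u_H ∈ Submodule.span ℝ (Set.range φ))
    (hGal : ∀ v : V, a u_H (v - C v) = F (v - C v)) :
    (∀ k : Fin N, q k (u - u_H) = 0) ∧ (∀ k : Fin N, q k u = q k u_H) := by
  set e : V := u - u_H with he
  -- Galerkin orthogonality for the error
  have horth : ∀ v : V, a e (v - C v) = 0 := by
    intro v
    have hsplit : a e (v - C v) = a u (v - C v) - a u_H (v - C v) := by
      simp [he, map_sub, LinearMap.sub_apply]; ring
    rw [hsplit, hu, hGal]; ring
  -- the coarse part of the error
  set z : V := ∑ j : Fin N, q j e • φ j with hz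
  have hqz : ∀ k : Fin N, q k z = q k e := by
    intro k
    rw [hz, map_sum]
    have : ∀ j : Fin N, q k (q j e • φ j) = if k = j then q j e else 0 := by
      intro j
      rw [map_smul, smul_eq_mul, hbi k j]
      by_cases h : k = j <;> simp [h]
    rw [Finset.sum_congr rfl (fun j _ => this j), Finset.sum_ite_eq]
    simp
  -- w := e - z ∈ W
  have hw : ∀ k : Fin N, q k (e - z) = 0 := by
    intro k; rw [map_sub, hqz]; ring
  -- a(e - z, v - Cv) = 0 for all v
  have hwa : ∀ v : V, a (e - z) (v - C v) = 0 := by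
    intro v
    have h := hC v (e - z) hw
    rw [map_sub, h, sub_self]
  -- hence a(z, v - Cv) = 0
  have hza : ∀ v : V, a z (v - C v) = 0 := by
    intro v
    have h1 := horth v
    have h2 := hwa v
    have : a e (v - C v) - a (e - z) (v - C v) = a z (v - C v) := by
      simp [map_sub, LinearMap.sub_apply]; ring
    rw [← this, h1, h2]; ring
  -- Cz ∈ W, so a(Cz, v - Cv) = 0
  have hCza : ∀ v : V, a (C z) (v - C v) = 0 := by
    intro v
    have h := hC v (C z) (fun k => hCW z k)
    rw [map_sub, h, sub_self]
  -- a(z - Cz, z - Cz) = 0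
  have hkey : a (z - C z) (z - C z) = 0 := by
    have h1 := hza z
    have h2 := hCza z
    simp [map_sub, LinearMap.sub_apply] at h1 h2 ⊢
    linarith
  -- coercivity: z = Cz
  have hzero : z - C z = 0 := by
    have := hcoer (z - C z)
    rw [hkey] at this
    have hn : ‖z - C z‖ ^ 2 ≤ 0 := by
      nlinarith [sq_nonneg ‖z - C z‖]
    have : ‖z - C z‖ = 0 := by
      nlinarith [norm_nonneg (z - C z)]
    exact norm_eq_zero.mp this
  have hzeq : z = C z := by
    have := sub_eq_zero.mp hzero; exact this
  -- conclude
  have hmain : ∀ k : Fin N, q k e = 0 := by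
    intro k
    rw [← hqz k, hzeq]
    exact hCW z k
  refine ⟨hmain, fun k => ?_⟩
  have := hmain k
  rw [he, map_sub] at this
  linarith
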